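/- Let M(q) = Σ_{n≥0} A_n q^n be the generating function of bi-leveled trees and Y(q) = Σ_{n≥0} C_n q^n the Catalan generating function. Then M(q) = 1 + q·Y(q)·Y(q·Y(q)) as formal power series. -/

import Mathlib

/-- Planar binary trees. -/
inductive PBTree : Type
  | leaf : PBTree
  | node : PBTree → PBTree → PBTree
  deriving DecidableEq, Repr

namespace PBTree

instance : Inhabited PBTree := ⟨leaf⟩

/-- Number of internal nodes. -/
def size : PBTree → ℕ
  | leaf => 0
  | node l r => l.size + r.size + 1

/-- Number of leaves. -/
def nleaves : PBTree → ℕ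
  | leaf => 1
  | node l r => l.nleaves + r.nleaves

end PBTree

/-- Planar binary trees with `Bool`-labelled internal nodes; a label `true` means the
node belongs to the distinguished upper order ideal.  Bi-leveled trees are the labelled
trees satisfying `isBL` below. -/
inductive LTree : Type
  | leaf : LTree
  | node : LTree → Bool → LTree → LTree
  deriving DecidableEq, Repr

namespace LTree

instance : Inhabited LTree := ⟨leaf⟩

def size : LTree → ℕ
  | leaf => 0
  | node l _ r => l.size + r.size + 1

def nleaves : LTree → ℕ
  | leaf => 1
  | node l _ r => l.nleaves + r.nleaves

/-- Forget the labels. -/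
def forget : LTree → PBTree
  | leaf => PBTree.leaf
  | node l _ r => PBTree.node l.forget r.forget

/-- All labels are `false`. -/
def allFalse : LTree → Bool
  | leaf => true
  | node l b r => !b && l.allFalse && r.allFalse

/-- The set of `true` nodes forms an upper order ideal of the node poset
(each node is below its parent; the root is maximal). -/
def isUpperIdeal : LTree → Bool
  | leaf => true
  | node l b r => if b then l.isUpperIdeal && r.isUpperIdeal else l.allFalse && r.allFalse

/-- The leftmost node is labelled `true` and is a minimal element of the ideal,
i.e. its descendants are all labelled `false`.  (Vacuously true for the empty tree.) -/
def leftmostMin : LTree → Bool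
  | leaf => true
  | node leaf b r => b && r.allFalse
  | node l _ _ => leftmostMin l

/-- `b` is a bi-leveled tree: the `true` nodes form an upper order ideal containing
the leftmost node as a minimal element. -/
def isBL (b : LTree) : Prop := b.isUpperIdeal = true ∧ b.leftmostMin = true

end LTree

/-- The number of bi-leveled trees with `n` (internal) nodes. -/
noncomputable def blCount (n : ℕ) : ℕ :=
  {b : LTree | LTree.isBL b ∧ b.size = n}.ncard

open PowerSeries

/-- Composition of formal power series (valid when `g` has zero constant term):
the `N`-th coefficient of `f ∘ g` is `∑_{n ≤ N} f_n · [q^N](g^n)`. -/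
noncomputable def psComp (f g : PowerSeries ℚ) : PowerSeries ℚ :=
  PowerSeries.mk fun N => ∑ n ∈ Finset.range (N + 1),
    (PowerSeries.coeff n f) * PowerSeries.coeff N (g ^ n)

/-- The Catalan generating function `Y(q) = ∑ C_n q^n`. -/
noncomputable def Yser : PowerSeries ℚ := PowerSeries.mk fun n => (catalan n : ℚ)

/-- The generating function `M(q) = ∑ A_n q^n` of bi-leveled trees. -/
noncomputable def Mser : PowerSeries ℚ := PowerSeries.mk fun n => (blCount n : ℚ)

/-- The numbers `B n`: `B 1 = 1` and for `n > 1`,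
`B n = ∑_{k=0}^{n-1} (k/(n-1)) · C(2n-k-3, n-k-1) · C_k`. -/
noncomputable def Bnum : ℕ → ℚ := fun n =>
  if n = 1 then 1
  else if 2 ≤ n then
    ∑ k ∈ Finset.range n,
      ((k : ℚ) / ((n : ℚ) - 1)) * (Nat.choose (2 * n - k - 3) (n - k - 1) : ℚ) * (catalan k : ℚ)
  else 0

section Aux
open PowerSeries Finset

lemma coeff_pow_zero_of_lt {g : PowerSeries ℚ} (hg : PowerSeries.constantCoeff g = 0)
    {n N : ℕ} (h : N < n) : PowerSeries.coeff N (g ^ n) = 0 := by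
  induction n generalizing N with
  | zero => omega
  | succ n ih =>
    rw [pow_succ, PowerSeries.coeff_mul]
    apply Finset.sum_eq_zero
    rintro ⟨a, b⟩ hab
    rw [Finset.HasAntidiagonal.mem_antidiagonal] at hab
    rcases lt_or_ge a n with h' | h'
    · rw [ih h', zero_mul]
    · have hb : b = 0 := by omega
      subst hb
      rw [PowerSeries.coeff_zero_eq_constantCoeff, hg, mul_zero]

lemma psComp_one (g : PowerSeries ℚ) : psComp 1 g = 1 := by
  ext N
  simp only [psComp, PowerSeries.coeff_mk]
  rw [Finset.sum_eq_single 0]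
  · simp
  · intro n _ hn
    simp [PowerSeries.coeff_one, hn]
  · intro h
    simp at h

lemma psComp_X {g : PowerSeries ℚ} (hg : PowerSeries.constantCoeff g = 0) :
    psComp PowerSeries.X g = g := by
  ext N
  simp only [psComp, PowerSeries.coeff_mk]
  cases N with
  | zero =>
    simp [PowerSeries.coeff_zero_eq_constantCoeff, hg]
  | succ m =>
    rw [Finset.sum_eq_single 1]
    · simp
    · intro n _ hn
      simp [PowerSeries.coeff_X, hn]
    · intro h
      exfalso
      apply h
      simp

lemma psComp_add (f₁ f₂ g : PowerSeries ℚ) : psComp (f₁ + f₂) g = psComp f₁ g + psComp f₂ g := by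
  ext N
  simp [psComp, add_mul, Finset.sum_add_distrib]

lemma psComp_mul {f₁ f₂ g : PowerSeries ℚ} (hg : PowerSeries.constantCoeff g = 0) :
    psComp (f₁ * f₂) g = psComp f₁ g * psComp f₂ g := by
  ext N
  have hT0 : ∀ {n p : ℕ}, p < n → PowerSeries.coeff p (g ^ n) = 0 :=
    fun h => coeff_pow_zero_of_lt hg h
  -- LHS equals the rectangular sum
  have lhs_eq : PowerSeries.coeff N (psComp (f₁ * f₂) g) =
      ∑ a ∈ range (N + 1), ∑ b ∈ range (N + 1),
        (PowerSeries.coeff a f₁) * (PowerSeries.coeff b f₂) *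
          PowerSeries.coeff N (g ^ (a + b)) := by
    simp only [psComp, PowerSeries.coeff_mk, PowerSeries.coeff_mul,
      Finset.Nat.sum_antidiagonal_eq_sum_range_succ_mk, Finset.sum_mul]
    have step1 : ∀ x ∈ range (N + 1),
        ∑ i ∈ range x.succ, (PowerSeries.coeff i f₁) * (PowerSeries.coeff (x - i) f₂) *
          PowerSeries.coeff N (g ^ x)
        = ∑ i ∈ range (x + 1),
            (PowerSeries.coeff i f₁) * (PowerSeries.coeff (x - i) f₂) *
              PowerSeries.coeff N (g ^ (i + (x - i))) := by
      intro x _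
      apply Finset.sum_congr rfl
      intro i hi
      rw [mem_range] at hi
      have : i + (x - i) = x := by omega
      rw [this]
    rw [Finset.sum_congr rfl step1]
    rw [Finset.sum_range_diag_flip (N + 1)
      (fun a b => (PowerSeries.coeff a f₁) * (PowerSeries.coeff b f₂) *
        PowerSeries.coeff N (g ^ (a + b)))]
    apply Finset.sum_congr rfl
    intro a ha
    rw [mem_range] at ha
    apply Finset.sum_subset
    · intro b hb
      rw [mem_range] at hb ⊢
      omega
    · intro b _ hb
      rw [mem_range] at hb
      rw [hT0 (by omega), mul_zero]
  -- RHS equals the rectangular sum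
  have rhs_eq : PowerSeries.coeff N (psComp f₁ g * psComp f₂ g) =
      ∑ a ∈ range (N + 1), ∑ b ∈ range (N + 1),
        (PowerSeries.coeff a f₁) * (PowerSeries.coeff b f₂) *
          PowerSeries.coeff N (g ^ (a + b)) := by
    rw [PowerSeries.coeff_mul, Finset.Nat.sum_antidiagonal_eq_sum_range_succ_mk]
    simp only [psComp, PowerSeries.coeff_mk]
    have step1 : ∀ p ∈ range (N + 1),
        (∑ a ∈ range (p + 1), (PowerSeries.coeff a f₁) * PowerSeries.coeff p (g ^ a)) *
          (∑ b ∈ range (N - p + 1), (PowerSeries.coeff b f₂) * PowerSeries.coeff (N - p) (g ^ b))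
        = ∑ a ∈ range (N + 1), ∑ b ∈ range (N + 1),
            ((PowerSeries.coeff a f₁) * PowerSeries.coeff p (g ^ a)) *
              ((PowerSeries.coeff b f₂) * PowerSeries.coeff (N - p) (g ^ b)) := by
      intro p hp
      rw [mem_range] at hp
      rw [Finset.sum_mul_sum]
      apply Finset.sum_subset_zero_on_sdiff
      · intro a ha
        rw [mem_range] at ha ⊢
        omega
      · intro a ha
        rw [Finset.mem_sdiff, mem_range, mem_range] at ha
        apply Finset.sum_eq_zero
        intro b _
        rw [hT0 (by omega)]
        ring
      · intro a ha
        apply Finset.sum_subset_zero_on_sdiff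
        · intro b hb
          rw [mem_range] at hb ⊢
          omega
        · intro b hb
          rw [Finset.mem_sdiff, mem_range, mem_range] at hb
          rw [@hT0 b (N - p) (by omega)]
          ring
        · intro b hb
          rfl
    rw [Finset.sum_congr rfl step1, Finset.sum_comm]
    apply Finset.sum_congr rfl
    intro a _
    rw [Finset.sum_comm]
    apply Finset.sum_congr rfl
    intro b _
    have : ∑ p ∈ range (N + 1),
        ((PowerSeries.coeff a f₁) * PowerSeries.coeff p (g ^ a)) *
          ((PowerSeries.coeff b f₂) * PowerSeries.coeff (N - p) (g ^ b))
        = (PowerSeries.coeff a f₁) * (PowerSeries.coeff b f₂) *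
            ∑ p ∈ range (N + 1), PowerSeries.coeff p (g ^ a) * PowerSeries.coeff (N - p) (g ^ b) := by
      rw [Finset.mul_sum]
      apply Finset.sum_congr rfl
      intro p _
      ring
    rw [this, ← Finset.Nat.sum_antidiagonal_eq_sum_range_succ_mk
      (fun q => PowerSeries.coeff q.1 (g ^ a) * PowerSeries.coeff q.2 (g ^ b)),
      ← PowerSeries.coeff_mul, ← pow_add]
  rw [lhs_eq, rhs_eq]

lemma psComp_pow {f g : PowerSeries ℚ} (hg : PowerSeries.constantCoeff g = 0) (k : ℕ) :
    psComp (f ^ k) g = (psComp f g) ^ k := by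
  induction k with
  | zero => simpa using psComp_one g
  | succ k ih => rw [pow_succ, psComp_mul hg, ih, pow_succ]

/-- Cancellation: if `D = X·E·D` then `D = 0`. -/
lemma eq_zero_of_self (D E : PowerSeries ℚ) (h : D = PowerSeries.X * (E * D)) : D = 0 := by
  ext n
  induction n using Nat.strong_induction_on with
  | _ n ih =>
    rw [map_zero]
    conv_lhs => rw [h]
    cases n with
    | zero => simp
    | succ m =>
      rw [PowerSeries.coeff_succ_X_mul, PowerSeries.coeff_mul]
      apply Finset.sum_eq_zero
      rintro ⟨a, b⟩ hab
      rw [Finset.HasAntidiagonal.mem_antidiagonal] at hab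
      have hb := ih b (by omega)
      rw [map_zero] at hb
      rw [hb, mul_zero]

lemma Yser_eq : Yser = 1 + PowerSeries.X * Yser ^ 2 := by
  ext N
  cases N with
  | zero => simp [Yser]
  | succ n =>
    rw [map_add, PowerSeries.coeff_one, sq, PowerSeries.coeff_succ_X_mul, PowerSeries.coeff_mul,
      Finset.Nat.sum_antidiagonal_eq_sum_range_succ_mk]
    simp only [Yser, PowerSeries.coeff_mk, if_neg (Nat.succ_ne_zero n), zero_add]
    rw [catalan_succ']
    rw [Finset.Nat.sum_antidiagonal_eq_sum_range_succ_mk]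
    push_cast
    rfl

end Aux

section Comb
open Finset

namespace LTree

lemma size_eq_zero {t : LTree} (h : t.size = 0) : t = leaf := by
  cases t with
  | leaf => rfl
  | node l b r => simp [size] at h

lemma allFalse_node {l r : LTree} {b : Bool} :
    (node l b r).allFalse = true ↔ b = false ∧ l.allFalse = true ∧ r.allFalse = true := by
  simp [allFalse, Bool.and_eq_true, and_assoc]

lemma isUpperIdeal_of_allFalse {t : LTree} (h : t.allFalse = true) : t.isUpperIdeal = true := by
  cases t with
  | leaf => rfl
  | node l b r =>
    rw [allFalse_node] at h
    obtain ⟨hb, hl, hr⟩ := h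
    subst hb
    simp [isUpperIdeal, hl, hr]

lemma leftmostMin_allFalse {t : LTree} (ht : t.allFalse = true) (hne : t ≠ leaf) :
    t.leftmostMin = false := by
  induction t with
  | leaf => exact absurd rfl hne
  | node l b r ihl ihr =>
    rw [allFalse_node] at ht
    obtain ⟨hb, hl, hr⟩ := ht
    subst hb
    cases l with
    | leaf => simp [leftmostMin]
    | node l1 b1 r1 =>
      rw [show (node (node l1 b1 r1) false r).leftmostMin = (node l1 b1 r1).leftmostMin from rfl]
      exact ihl hl (by simp)

lemma isUpperIdeal_node_true {l r : LTree} :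
    (node l true r).isUpperIdeal = true ↔ l.isUpperIdeal = true ∧ r.isUpperIdeal = true := by
  simp [isUpperIdeal]

lemma isBL_node_iff {l r : LTree} {b : Bool} :
    (node l b r).isBL ↔ b = true ∧
      ((l = leaf ∧ r.allFalse = true) ∨ (l ≠ leaf ∧ l.isBL ∧ r.isUpperIdeal = true)) := by
  constructor
  · rintro ⟨hu, hm⟩
    cases b with
    | false =>
      exfalso
      simp [isUpperIdeal] at hu
      obtain ⟨hl, hr⟩ := hu
      cases l with
      | leaf => simp [leftmostMin] at hm
      | node l1 b1 r1 =>
        rw [show (node (node l1 b1 r1) false r).leftmostMin = (node l1 b1 r1).leftmostMin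
          from rfl] at hm
        rw [leftmostMin_allFalse hl (by simp)] at hm
        exact Bool.false_ne_true hm
    | true =>
      refine ⟨rfl, ?_⟩
      rw [isUpperIdeal_node_true] at hu
      cases l with
      | leaf =>
        left
        refine ⟨rfl, ?_⟩
        simpa [leftmostMin] using hm
      | node l1 b1 r1 =>
        right
        refine ⟨by simp, ⟨hu.1, ?_⟩, hu.2⟩
        rwa [show (node (node l1 b1 r1) true r).leftmostMin = (node l1 b1 r1).leftmostMin
          from rfl] at hm
  · rintro ⟨hb, h⟩
    subst hb
    rcases h with ⟨hl, hr⟩ | ⟨hne, ⟨hu, hm⟩, hr⟩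
    · subst hl
      refine ⟨?_, ?_⟩
      · rw [isUpperIdeal_node_true]
        exact ⟨rfl, isUpperIdeal_of_allFalse hr⟩
      · simp [leftmostMin, hr]
    · refine ⟨?_, ?_⟩
      · rw [isUpperIdeal_node_true]
        exact ⟨hu, hr⟩
      · cases l with
        | leaf => exact absurd rfl hne
        | node l1 b1 r1 =>
          rwa [show (node (node l1 b1 r1) true r).leftmostMin = (node l1 b1 r1).leftmostMin
            from rfl]

lemma node_inj_false : Function.Injective
    (fun p : LTree × LTree => node p.1 false p.2) := by
  rintro ⟨a, b⟩ ⟨c, d⟩ h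
  simpa [Prod.ext_iff] using h

lemma node_inj_true : Function.Injective
    (fun p : LTree × LTree => node p.1 true p.2) := by
  rintro ⟨a, b⟩ ⟨c, d⟩ h
  simpa [Prod.ext_iff] using h

end LTree

open LTree

/-- All-false labelled trees with `n` internal nodes. -/
def enumA : ℕ → Finset LTree
  | 0 => {LTree.leaf}
  | n+1 => (Finset.range (n+1)).attach.biUnion fun i =>
      ((enumA i.1) ×ˢ (enumA (n - i.1))).image fun p => LTree.node p.1 false p.2
  decreasing_by
  · have := Finset.mem_range.mp i.2; omega
  · omega

/-- Upper-ideal labelled trees with `n` internal nodes. -/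
def enumU : ℕ → Finset LTree
  | 0 => {LTree.leaf}
  | n+1 => (Finset.range (n+1)).attach.biUnion fun i =>
      (((enumU i.1) ×ˢ (enumU (n - i.1))).image fun p => LTree.node p.1 true p.2) ∪
      (((enumA i.1) ×ˢ (enumA (n - i.1))).image fun p => LTree.node p.1 false p.2)
  decreasing_by
  · have := Finset.mem_range.mp i.2; omega
  · omega

/-- Bi-leveled trees with `n` internal nodes. -/
def enumB : ℕ → Finset LTree
  | 0 => {LTree.leaf}
  | n+1 => ((enumA n).image fun r => LTree.node LTree.leaf true r) ∪
      ((Finset.Ico 1 (n+1)).attach.biUnion fun j =>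
        ((enumB j.1) ×ˢ (enumU (n - j.1))).image fun p => LTree.node p.1 true p.2)
  decreasing_by
  · have := (Finset.mem_Ico.mp j.2).2; omega

lemma mem_enumA : ∀ n, ∀ t : LTree, t ∈ enumA n ↔ (t.allFalse = true ∧ t.size = n) := by
  intro n
  induction n using Nat.strong_induction_on with
  | _ n ih =>
    match n with
    | 0 =>
      intro t
      simp only [enumA, Finset.mem_singleton]
      constructor
      · rintro rfl
        exact ⟨rfl, rfl⟩
      · rintro ⟨_, hs⟩
        exact size_eq_zero hs
    | (m+1) =>
      intro t
      rw [enumA]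
      simp only [Finset.mem_biUnion, Finset.mem_attach, Finset.mem_image, Finset.mem_product,
        true_and]
      constructor
      · rintro ⟨i, ⟨l, r⟩, ⟨hl, hr⟩, rfl⟩
        have hi := Finset.mem_range.mp i.2
        have Hl := (ih i.1 (by omega) l).mp hl
        have Hr := (ih (m - i.1) (by omega) r).mp hr
        refine ⟨?_, ?_⟩
        · rw [allFalse_node]
          exact ⟨rfl, Hl.1, Hr.1⟩
        · simp only [size, Hl.2, Hr.2]
          omega
      · rintro ⟨hA, hs⟩
        cases t with
        | leaf => simp [size] at hs
        | node l b r =>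
          rw [allFalse_node] at hA
          obtain ⟨hb, hl, hr⟩ := hA
          subst hb
          simp only [size] at hs
          refine ⟨⟨l.size, Finset.mem_range.mpr (by omega)⟩, ⟨l, r⟩, ⟨?_, ?_⟩, rfl⟩
          · exact (ih l.size (by omega) l).mpr ⟨hl, rfl⟩
          · exact (ih (m - l.size) (by omega) r).mpr ⟨hr, by omega⟩

lemma mem_enumU : ∀ n, ∀ t : LTree, t ∈ enumU n ↔ (t.isUpperIdeal = true ∧ t.size = n) := by
  intro n
  induction n using Nat.strong_induction_on with
  | _ n ih =>
    match n with
    | 0 =>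
      intro t
      simp only [enumU, Finset.mem_singleton]
      constructor
      · rintro rfl
        exact ⟨rfl, rfl⟩
      · rintro ⟨_, hs⟩
        exact size_eq_zero hs
    | (m+1) =>
      intro t
      rw [enumU]
      simp only [Finset.mem_biUnion, Finset.mem_attach, Finset.mem_union, Finset.mem_image,
        Finset.mem_product, true_and]
      constructor
      · rintro ⟨i, hc | hc⟩
        · obtain ⟨⟨l, r⟩, ⟨hl, hr⟩, rfl⟩ := hc
          have hi := Finset.mem_range.mp i.2
          have Hl := (ih i.1 (by omega) l).mp hl
          have Hr := (ih (m - i.1) (by omega) r).mp hr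
          refine ⟨?_, ?_⟩
          · rw [isUpperIdeal_node_true]
            exact ⟨Hl.1, Hr.1⟩
          · simp only [size, Hl.2, Hr.2]
            omega
        · obtain ⟨⟨l, r⟩, ⟨hl, hr⟩, rfl⟩ := hc
          have hi := Finset.mem_range.mp i.2
          have Hl := (mem_enumA i.1 l).mp hl
          have Hr := (mem_enumA (m - i.1) r).mp hr
          refine ⟨?_, ?_⟩
          · simp [LTree.isUpperIdeal, Hl.1, Hr.1]
          · simp only [size, Hl.2, Hr.2]
            omega
      · rintro ⟨hU, hs⟩
        cases t with
        | leaf => simp [size] at hs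
        | node l b r =>
          simp only [size] at hs
          refine ⟨⟨l.size, Finset.mem_range.mpr (by omega)⟩, ?_⟩
          cases b with
          | true =>
            rw [isUpperIdeal_node_true] at hU
            left
            refine ⟨⟨l, r⟩, ⟨?_, ?_⟩, rfl⟩
            · exact (ih l.size (by omega) l).mpr ⟨hU.1, rfl⟩
            · exact (ih (m - l.size) (by omega) r).mpr ⟨hU.2, by omega⟩
          | false =>
            rw [show (LTree.node l false r).isUpperIdeal = (l.allFalse && r.allFalse) from rfl,
              Bool.and_eq_true] at hU
            right
            refine ⟨⟨l, r⟩, ⟨?_, ?_⟩, rfl⟩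
            · exact (mem_enumA l.size l).mpr ⟨hU.1, rfl⟩
            · exact (mem_enumA (m - l.size) r).mpr ⟨hU.2, by omega⟩

lemma mem_enumB : ∀ n, ∀ t : LTree, t ∈ enumB n ↔ (t.isBL ∧ t.size = n) := by
  intro n
  induction n using Nat.strong_induction_on with
  | _ n ih =>
    match n with
    | 0 =>
      intro t
      simp only [enumB, Finset.mem_singleton]
      constructor
      · rintro rfl
        exact ⟨⟨rfl, rfl⟩, rfl⟩
      · rintro ⟨_, hs⟩
        exact size_eq_zero hs
    | (m+1) =>
      intro t
      rw [enumB]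
      simp only [Finset.mem_union, Finset.mem_biUnion, Finset.mem_attach, Finset.mem_image,
        Finset.mem_product, true_and]
      constructor
      · rintro (⟨r, hr, rfl⟩ | ⟨j, ⟨l, r⟩, ⟨hl, hr⟩, rfl⟩)
        · have Hr := (mem_enumA m r).mp hr
          refine ⟨isBL_node_iff.mpr ⟨rfl, Or.inl ⟨rfl, Hr.1⟩⟩, ?_⟩
          simp [size, Hr.2]
        · have hj := Finset.mem_Ico.mp j.2
          have Hl := (ih j.1 (by omega) l).mp hl
          have Hr := (mem_enumU (m - j.1) r).mp hr
          have hlne : l ≠ LTree.leaf := by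
            intro h
            rw [h] at Hl
            simp [LTree.size] at Hl
            omega
          refine ⟨isBL_node_iff.mpr ⟨rfl, Or.inr ⟨hlne, Hl.1, Hr.1⟩⟩, ?_⟩
          simp only [size, Hl.2, Hr.2]
          omega
      · rintro ⟨hBL, hs⟩
        cases t with
        | leaf => simp [size] at hs
        | node l b r =>
          obtain ⟨hb, hcase⟩ := isBL_node_iff.mp hBL
          subst hb
          simp only [size] at hs
          rcases hcase with ⟨rfl, hr⟩ | ⟨hne, hl, hr⟩
          · left
            refine ⟨r, (mem_enumA m r).mpr ⟨hr, ?_⟩, rfl⟩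
            simp only [LTree.size] at hs
            omega
          · right
            have hlpos : 1 ≤ l.size := by
              cases l with
              | leaf => exact absurd rfl hne
              | node l1 b1 r1 => simp [LTree.size]
            refine ⟨⟨l.size, Finset.mem_Ico.mpr ⟨hlpos, by omega⟩⟩, ⟨l, r⟩, ⟨?_, ?_⟩, rfl⟩
            · exact (ih l.size (by omega) l).mpr ⟨hl, rfl⟩
            · exact (mem_enumU (m - l.size) r).mpr ⟨hr, by omega⟩

end Comb

section Cards
open Finset LTree

lemma disjoint_piece {s₁ t₁ s₂ t₂ : Finset LTree} {b₁ b₂ : Bool} {i j : ℕ}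
    (h₁ : ∀ l ∈ s₁, l.size = i) (h₂ : ∀ l ∈ s₂, l.size = j) (hij : i ≠ j) :
    Disjoint ((s₁ ×ˢ t₁).image fun p => LTree.node p.1 b₁ p.2)
      ((s₂ ×ˢ t₂).image fun p => LTree.node p.1 b₂ p.2) := by
  rw [Finset.disjoint_left]
  rintro t ht ht'
  simp only [Finset.mem_image, Finset.mem_product] at ht ht'
  obtain ⟨⟨l, r⟩, ⟨hl, _⟩, rfl⟩ := ht
  obtain ⟨⟨l', r'⟩, ⟨hl', _⟩, heq⟩ := ht'
  rw [LTree.node.injEq] at heq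
  have h0 : l' = l := heq.1
  apply hij
  rw [← h₁ l hl, ← h₂ l' hl', h0]

lemma disjoint_piece_bool {s₁ t₁ s₂ t₂ : Finset LTree} :
    Disjoint ((s₁ ×ˢ t₁).image fun p => LTree.node p.1 true p.2)
      ((s₂ ×ˢ t₂).image fun p => LTree.node p.1 false p.2) := by
  rw [Finset.disjoint_left]
  rintro t ht ht'
  simp only [Finset.mem_image, Finset.mem_product] at ht ht'
  obtain ⟨⟨l, r⟩, _, rfl⟩ := ht
  obtain ⟨⟨l', r'⟩, _, heq⟩ := ht'
  rw [LTree.node.injEq] at heq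
  exact Bool.false_ne_true heq.2.1

lemma card_enumA : ∀ n, (enumA n).card = catalan n := by
  intro n
  induction n using Nat.strong_induction_on with
  | _ n ih =>
    match n with
    | 0 => simp [enumA, catalan_zero]
    | (m+1) =>
      rw [enumA, Finset.card_biUnion]
      · have : ∀ i ∈ (Finset.range (m+1)).attach,
            (((enumA i.1) ×ˢ (enumA (m - i.1))).image fun p => LTree.node p.1 false p.2).card
            = catalan i.1 * catalan (m - i.1) := by
          intro i _
          have hi := Finset.mem_range.mp i.2
          rw [Finset.card_image_of_injective _ node_inj_false, Finset.card_product,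
            ih i.1 (by omega), ih (m - i.1) (by omega)]
        rw [Finset.sum_congr rfl this, Finset.sum_attach (Finset.range (m+1))
          (fun i => catalan i * catalan (m - i)), catalan_succ',
          Finset.Nat.sum_antidiagonal_eq_sum_range_succ_mk]
      · intro i _ j _ hij
        refine disjoint_piece (fun l hl => ((mem_enumA i.1 l).mp hl).2)
          (fun l hl => ((mem_enumA j.1 l).mp hl).2) ?_
        exact fun h => hij (Subtype.ext h)

/-- Number of upper-ideal trees of size `n`. -/
def Ucnt (n : ℕ) : ℕ := (enumU n).card

/-- Number of bi-leveled trees of size `n`. -/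
def Acnt (n : ℕ) : ℕ := (enumB n).card

lemma Ucnt_zero : Ucnt 0 = 1 := by simp [Ucnt, enumU]

lemma Acnt_zero : Acnt 0 = 1 := by simp [Acnt, enumB]

lemma Ucnt_succ (m : ℕ) :
    Ucnt (m+1) = catalan (m+1) + ∑ i ∈ Finset.range (m+1), Ucnt i * Ucnt (m - i) := by
  rw [Ucnt, enumU, Finset.card_biUnion]
  · have : ∀ i ∈ (Finset.range (m+1)).attach,
        ((((enumU i.1) ×ˢ (enumU (m - i.1))).image fun p => LTree.node p.1 true p.2) ∪
          (((enumA i.1) ×ˢ (enumA (m - i.1))).image fun p => LTree.node p.1 false p.2)).card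
        = Ucnt i.1 * Ucnt (m - i.1) + catalan i.1 * catalan (m - i.1) := by
      intro i _
      rw [Finset.card_union_of_disjoint disjoint_piece_bool,
        Finset.card_image_of_injective _ node_inj_true,
        Finset.card_image_of_injective _ node_inj_false,
        Finset.card_product, Finset.card_product, card_enumA, card_enumA]
      rfl
    rw [Finset.sum_congr rfl this, Finset.sum_attach (Finset.range (m+1))
      (fun i => Ucnt i * Ucnt (m - i) + catalan i * catalan (m - i)),
      Finset.sum_add_distrib, catalan_succ', Finset.Nat.sum_antidiagonal_eq_sum_range_succ_mk]
    ring
  · intro i _ j _ hij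
    have hsU : ∀ k : ℕ, ∀ l ∈ enumU k, l.size = k := fun k l hl => ((mem_enumU k l).mp hl).2
    have hsA : ∀ k : ℕ, ∀ l ∈ enumA k, l.size = k := fun k l hl => ((mem_enumA k l).mp hl).2
    have hne : i.1 ≠ j.1 := fun h => hij (Subtype.ext h)
    refine Finset.disjoint_union_left.mpr ⟨?_, ?_⟩ <;>
      refine Finset.disjoint_union_right.mpr ⟨?_, ?_⟩
    · exact disjoint_piece (hsU i.1) (hsU j.1) hne
    · exact disjoint_piece (hsU i.1) (hsA j.1) hne
    · exact disjoint_piece (hsA i.1) (hsU j.1) hne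
    · exact disjoint_piece (hsA i.1) (hsA j.1) hne

lemma Acnt_succ (m : ℕ) :
    Acnt (m+1) = catalan m + ∑ j ∈ Finset.Ico 1 (m+1), Acnt j * Ucnt (m - j) := by
  rw [Acnt, enumB, Finset.card_union_of_disjoint, Finset.card_image_of_injective,
    card_enumA, Finset.card_biUnion]
  · have : ∀ j ∈ (Finset.Ico 1 (m+1)).attach,
        (((enumB j.1) ×ˢ (enumU (m - j.1))).image fun p => LTree.node p.1 true p.2).card
        = Acnt j.1 * Ucnt (m - j.1) := by
      intro j _
      rw [Finset.card_image_of_injective _ node_inj_true, Finset.card_product]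
      rfl
    rw [Finset.sum_congr rfl this,
      Finset.sum_attach (Finset.Ico 1 (m+1)) (fun j => Acnt j * Ucnt (m - j))]
  · intro i _ j _ hij
    refine disjoint_piece (fun l hl => ((mem_enumB i.1 l).mp hl).2)
      (fun l hl => ((mem_enumB j.1 l).mp hl).2) ?_
    exact fun h => hij (Subtype.ext h)
  · intro r r' h
    simpa using h
  · rw [Finset.disjoint_left]
    rintro t ht ht'
    simp only [Finset.mem_image, Finset.mem_biUnion, Finset.mem_attach, Finset.mem_product,
      true_and] at ht ht'
    obtain ⟨r, _, rfl⟩ := ht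
    obtain ⟨j, ⟨l', r'⟩, ⟨hl', _⟩, heq⟩ := ht'
    rw [LTree.node.injEq] at heq
    have h0 : l' = LTree.leaf := heq.1
    have hj := (Finset.mem_Ico.mp j.2).1
    have := ((mem_enumB j.1 l').mp hl').2
    rw [h0] at this
    simp [LTree.size] at this
    omega

lemma blCount_eq (n : ℕ) : blCount n = Acnt n := by
  have hset : {b : LTree | LTree.isBL b ∧ b.size = n} = ↑(enumB n) := by
    ext t
    simp only [Set.mem_setOf_eq, Finset.coe_insert, Set.mem_insert_iff, Finset.mem_coe]
    exact (mem_enumB n t).symm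
  rw [blCount, hset, Set.ncard_coe_finset]
  rfl

end Cards

section Series
open PowerSeries Finset

/-- Generating function of upper-ideal trees. -/
noncomputable def Us : PowerSeries ℚ := PowerSeries.mk fun n => (Ucnt n : ℚ)

lemma Us_eq : Us = Yser + PowerSeries.X * Us ^ 2 := by
  ext N
  cases N with
  | zero =>
    simp [Us, Yser, Ucnt_zero]
  | succ n =>
    rw [map_add, sq, PowerSeries.coeff_succ_X_mul, PowerSeries.coeff_mul,
      Finset.Nat.sum_antidiagonal_eq_sum_range_succ_mk]
    simp only [Us, Yser, PowerSeries.coeff_mk]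
    rw [Ucnt_succ]
    push_cast
    rfl

lemma M_eq : Mser = 1 + PowerSeries.X * Yser + PowerSeries.X * ((Mser - 1) * Us) := by
  ext N
  rw [map_add, map_add]
  cases N with
  | zero =>
    simp [Mser, blCount_eq, Acnt_zero]
  | succ n =>
    have hstep : ∀ i ∈ Finset.range (n+1),
        PowerSeries.coeff i (Mser - 1) * PowerSeries.coeff (n - i) Us
        = (if i = 0 then 0 else (Acnt i : ℚ)) * (Ucnt (n - i) : ℚ) := by
      intro i _
      rw [map_sub, PowerSeries.coeff_one]
      simp only [Mser, Us, PowerSeries.coeff_mk, blCount_eq]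
      cases i with
      | zero => simp [Acnt_zero]
      | succ k => simp
    rw [PowerSeries.coeff_one, PowerSeries.coeff_succ_X_mul, PowerSeries.coeff_succ_X_mul,
      PowerSeries.coeff_mul, Finset.Nat.sum_antidiagonal_eq_sum_range_succ_mk]
    rw [Finset.sum_congr rfl hstep]
    simp only [Mser, Yser, PowerSeries.coeff_mk, if_neg (Nat.succ_ne_zero n), zero_add]
    rw [blCount_eq, Acnt_succ]
    rw [Finset.range_eq_Ico,
      Finset.sum_eq_sum_Ico_succ_bot (by omega : 0 < n + 1)]
    rw [if_pos rfl, zero_mul, zero_add]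
    push_cast
    congr 1
    apply Finset.sum_congr rfl
    intro i hi
    rw [if_neg (by have := (Finset.mem_Ico.mp hi).1; omega)]

lemma main_alg (YZ : PowerSeries ℚ)
    (h2 : YZ = 1 + (PowerSeries.X * Yser) * YZ ^ 2) :
    Mser = 1 + PowerSeries.X * Yser * YZ := by
  have h3 : Yser * YZ = Yser + PowerSeries.X * (Yser * YZ) ^ 2 := by
    conv_lhs => rw [h2]
    have h1 := Yser_eq
    calc Yser * (1 + (PowerSeries.X * Yser) * YZ ^ 2)
        = Yser + (PowerSeries.X * Yser ^ 2) * YZ ^ 2 := by ring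
      _ = Yser + PowerSeries.X * (Yser * YZ) ^ 2 := by ring
  have hD : Us - Yser * YZ = PowerSeries.X * ((Us + Yser * YZ) * (Us - Yser * YZ)) := by
    conv_lhs => rw [Us_eq, h3]
    ring
  have h4 : Us = Yser * YZ := sub_eq_zero.mp (eq_zero_of_self _ _ hD)
  have h5 : Mser - 1 = PowerSeries.X * Yser + PowerSeries.X * ((Mser - 1) * Us) := by
    conv_lhs => rw [M_eq]
    ring
  rw [h4] at h5
  have h6 : (PowerSeries.X * Yser) * YZ =
      PowerSeries.X * Yser +
        PowerSeries.X * (((PowerSeries.X * Yser) * YZ) * (Yser * YZ)) := by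
    conv_lhs => rw [h2]
    ring
  have hD2 : (Mser - 1) - (PowerSeries.X * Yser) * YZ =
      PowerSeries.X * ((Yser * YZ) * ((Mser - 1) - (PowerSeries.X * Yser) * YZ)) := by
    conv_lhs => rw [h5, h6]
    ring
  have h7 := sub_eq_zero.mp (eq_zero_of_self _ _ hD2)
  linear_combination h7

end Series

/-- `M(q) = 1 + q·Y(q)·Y(q·Y(q))` as formal power series, where `M` is
the generating function of bi-leveled trees and `Y` the Catalan generating function. -/
theorem Mser_eq :
    Mser = 1 + (PowerSeries.X : PowerSeries ℚ) * Yser * psComp Yser (PowerSeries.X * Yser) := by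
  have hZ0 : PowerSeries.constantCoeff (PowerSeries.X * Yser) = 0 := by
    simp
  apply main_alg
  have hsub : psComp Yser (PowerSeries.X * Yser)
      = psComp (1 + PowerSeries.X * Yser ^ 2) (PowerSeries.X * Yser) := by
    rw [← Yser_eq]
  conv_lhs => rw [hsub, psComp_add, psComp_one, psComp_mul hZ0, psComp_X hZ0, psComp_pow hZ0]
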